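/- arXiv:1110.3100 — 3 statements merged into one kernel-verified Lean document; each statement's English description precedes it below -/
import Mathlib

section
/- Let {x_i} and {y_i} be sequences of mutually independent Bernoulli random variables with E[Σ x_i] = α and E[Σ y_i] = β, where α < β. Then P(Σ x_i > Σ y_i) < 2·exp(−(α−β)²/(8(α+β))). -/
open MeasureTheory ProbabilityTheory Finset

open Real

lemma iIndepFun_precomp {ι κ Ω β : Type*} [MeasurableSpace Ω] {mβ : MeasurableSpace β}
    {μ : Measure Ω} {f : ι → Ω → β} (g : κ → ι) (hg : Function.Injective g)
    (h : iIndepFun (m := fun _ : ι => mβ) f μ) :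
    iIndepFun (m := fun _ : κ => mβ) (fun k => f (g k)) μ := by
  classical
  rw [iIndepFun_iff_measure_inter_preimage_eq_mul] at h ⊢
  intro S sets hsets
  have key := h (S.map ⟨g, hg⟩)
    (sets := Function.extend g sets fun _ => Set.univ) ?_
  · have h1 : (⋂ i ∈ S.map ⟨g, hg⟩, f i ⁻¹' Function.extend g sets (fun _ => Set.univ) i)
        = ⋂ k ∈ S, f (g k) ⁻¹' sets k := by
      ext ω
      simp only [Set.mem_iInter, Finset.mem_map, Function.Embedding.coeFn_mk, Set.mem_preimage]
      constructor
      · intro H k hk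
        have := H (g k) ⟨k, hk, rfl⟩
        rwa [hg.extend_apply] at this
      · rintro H i ⟨k, hk, rfl⟩
        rw [hg.extend_apply]; exact H k hk
    have h2 : (∏ i ∈ S.map ⟨g, hg⟩, μ (f i ⁻¹' Function.extend g sets (fun _ => Set.univ) i))
        = ∏ k ∈ S, μ (f (g k) ⁻¹' sets k) := by
      rw [Finset.prod_map]
      exact Finset.prod_congr rfl fun k _ => by rw [Function.Embedding.coeFn_mk, hg.extend_apply]
    rw [h1, h2] at key
    exact key
  · rintro i hi
    rcases Finset.mem_map.1 hi with ⟨k, hk, rfl⟩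
    rw [Function.Embedding.coeFn_mk, hg.extend_apply]
    exact hsets k hk

lemma exp_le_one_add_self_add_sq {s : ℝ} (h0 : 0 ≤ s) (h1 : s ≤ 1) :
    Real.exp s ≤ 1 + s + s ^ 2 := by
  have habs : |s| ≤ 1 := abs_le.2 ⟨by linarith, h1⟩
  have h := Real.exp_bound habs (by norm_num : 0 < 3)
  rw [abs_of_nonneg h0] at h
  have h' : Real.exp s - (1 + s + s ^ 2 / 2) ≤ s ^ 3 * (4 / (6 * 3)) := by
    have := abs_le.1 h
    have hsum : ∑ i ∈ range 3, s ^ i / (i.factorial : ℝ) = 1 + s + s ^ 2 / 2 := by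
      simp [Finset.sum_range_succ, Nat.factorial]
    rw [hsum] at this
    norm_num [Nat.factorial] at this ⊢
    linarith [this.2]
  nlinarith [pow_le_pow_left₀ h0 h1 3, sq_nonneg s, pow_le_one₀ h0 h1 (n := 3)]

lemma exp_neg_le_quad {u : ℝ} (hu : 0 ≤ u) : Real.exp (-u) ≤ 1 - u + u ^ 2 / 2 := by
  have hq : 1 + u + u ^ 2 / 2 ≤ Real.exp u := Real.quadratic_le_exp_of_nonneg hu
  have hprod : Real.exp (-u) * Real.exp u = 1 := by
    rw [← Real.exp_add]; simp
  nlinarith [Real.exp_pos (-u), Real.exp_pos u,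
    mul_le_mul_of_nonneg_left hq (Real.exp_pos (-u)).le, sq_nonneg (u ^ 2), sq_nonneg u]

lemma mgf_sum_bernoulli_le {Ω : Type*} [MeasurableSpace Ω] {μ : Measure Ω}
    [IsProbabilityMeasure μ] {N : ℕ} {x : Fin N → Ω → ℝ}
    (hmx : ∀ i, Measurable (x i)) (hx01 : ∀ i ω, x i ω = 0 ∨ x i ω = 1)
    (hindep : iIndepFun x μ)
    (t : ℝ) :
    mgf (∑ i, x i) μ t ≤ Real.exp ((Real.exp t - 1) * ∫ ω, (∑ i, x i ω) ∂μ) := by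
  have hint : ∀ i, Integrable (x i) μ := fun i =>
    (integrable_const 1).mono' (hmx i).aestronglyMeasurable (ae_of_all _ fun ω => by
      rcases hx01 i ω with h | h <;> simp [h])
  have hmgf : ∀ i, mgf (x i) μ t = 1 + (Real.exp t - 1) * ∫ ω, x i ω ∂μ := by
    intro i
    have hpt : (fun ω => Real.exp (t * x i ω)) =
        fun ω => 1 + (Real.exp t - 1) * x i ω := by
      funext ω
      rcases hx01 i ω with h | h <;> simp [h]
    rw [mgf, hpt, integral_add (integrable_const 1) ((hint i).const_mul _),
      integral_const, MeasureTheory.integral_const_mul]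
    simp
  rw [hindep.mgf_sum hmx Finset.univ]
  calc ∏ i, mgf (x i) μ t
      ≤ ∏ i, Real.exp ((Real.exp t - 1) * ∫ ω, x i ω ∂μ) := by
        refine Finset.prod_le_prod (fun i _ => mgf_nonneg) (fun i _ => ?_)
        rw [hmgf i]
        have := Real.add_one_le_exp ((Real.exp t - 1) * ∫ ω, x i ω ∂μ)
        linarith
    _ = Real.exp ((Real.exp t - 1) * ∑ i, ∫ ω, x i ω ∂μ) := by
        rw [← Real.exp_sum, Finset.mul_sum]
    _ = _ := by
        rw [integral_finset_sum _ fun i _ => hint i]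

/-- If `{x_i}` and `{y_i}` are mutually independent Bernoulli random
variables with `E[Σ x_i] = α`, `E[Σ y_i] = β`, `α < β`, then
`P(Σ x_i > Σ y_i) < 2 exp(-(α-β)^2 / (8(α+β)))`. -/
theorem bernoulli_sum_tail
    {Ω : Type*} [MeasurableSpace Ω] (μ : Measure Ω) [IsProbabilityMeasure μ]
    (N : ℕ) (x y : Fin N → Ω → ℝ) (α β : ℝ)
    (hmx : ∀ i, Measurable (x i)) (hmy : ∀ i, Measurable (y i))
    (hx01 : ∀ i ω, x i ω = 0 ∨ x i ω = 1)
    (hy01 : ∀ i ω, y i ω = 0 ∨ y i ω = 1)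
    (hindep : iIndepFun
      (Sum.elim x y) μ)
    (hEx : ∫ ω, (∑ i, x i ω) ∂μ = α)
    (hEy : ∫ ω, (∑ i, y i ω) ∂μ = β)
    (hαβ : α < β) :
    μ {ω | ∑ i, y i ω < ∑ i, x i ω}
      < ENNReal.ofReal (2 * Real.exp (-(α - β) ^ 2 / (8 * (α + β)))) := by
  classical
  have hxind : iIndepFun x μ :=
    iIndepFun_precomp Sum.inl Sum.inl_injective hindep
  have hyind : iIndepFun y μ :=
    iIndepFun_precomp Sum.inr Sum.inr_injective hindep
  set T : ℝ := (β - α) / 2 with hTdef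
  set m : ℝ := (α + β) / 2 with hmdef
  have hT : 0 < T := by rw [hTdef]; linarith
  have hα0 : 0 ≤ α := by
    rw [← hEx]
    exact integral_nonneg fun ω => Finset.sum_nonneg fun i _ => by
      rcases hx01 i ω with h | h <;> simp [h]
  have hβ : 0 < β := lt_of_le_of_lt hα0 hαβ
  have hαβpos : 0 < α + β := by linarith
  -- integrability of exponentials of sums
  have hintexp : ∀ (z : Fin N → Ω → ℝ), (∀ i, Measurable (z i)) →
      (∀ i ω, z i ω = 0 ∨ z i ω = 1) → ∀ t : ℝ,
      Integrable (fun ω => Real.exp (t * (∑ i, z i) ω)) μ := by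
    intro z hm h01 t
    have hm' : Measurable fun ω => ∑ i, z i ω := Finset.measurable_sum _ fun i _ => hm i
    have hm'' : Measurable fun ω => (∑ i, z i) ω := by
      simpa [Finset.sum_apply] using hm'
    refine (integrable_const (Real.exp (|t| * N))).mono'
      ((measurable_exp.comp (hm''.const_mul t)).aestronglyMeasurable) (ae_of_all _ fun ω => ?_)
    have h0 : 0 ≤ (∑ i, z i) ω := by
      rw [Finset.sum_apply]
      exact Finset.sum_nonneg fun i _ => by rcases h01 i ω with h | h <;> simp [h]
    have hN : (∑ i, z i) ω ≤ N := by
      rw [Finset.sum_apply]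
      calc ∑ i, z i ω ≤ ∑ _i : Fin N, (1 : ℝ) :=
            Finset.sum_le_sum fun i _ => by rcases h01 i ω with h | h <;> simp [h]
        _ = N := by simp
    simp only [Function.comp, Real.norm_eq_abs, Real.abs_exp]
    exact Real.exp_le_exp.2 (le_trans (mul_le_mul_of_nonneg_right (le_abs_self t) h0)
      (mul_le_mul_of_nonneg_left hN (abs_nonneg t)))
  -- generic upper tail bound
  have hup_gen : ∀ s : ℝ, 0 ≤ s → (μ {ω | m ≤ (∑ i, x i) ω}).toReal
      ≤ Real.exp (α * (Real.exp s - 1 - s) - s * T) := by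
    intro s hs
    have hch := measure_ge_le_exp_mul_mgf (μ := μ) (X := ∑ i, x i) m hs (hintexp x hmx hx01 s)
    have hmgf := mgf_sum_bernoulli_le hmx hx01 hxind s
    rw [hEx] at hmgf
    calc (μ {ω | m ≤ (∑ i, x i) ω}).toReal
        ≤ Real.exp (-s * m) * mgf (∑ i, x i) μ s := hch
      _ ≤ Real.exp (-s * m) * Real.exp ((Real.exp s - 1) * α) :=
          mul_le_mul_of_nonneg_left hmgf (Real.exp_pos _).le
      _ = Real.exp (α * (Real.exp s - 1 - s) - s * T) := by
          rw [← Real.exp_add]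
          congr 1
          rw [hmdef, hTdef]; ring
  -- generic lower tail bound
  have hlow_gen : ∀ u : ℝ, 0 ≤ u → (μ {ω | (∑ i, y i) ω ≤ m}).toReal
      ≤ Real.exp (β * (Real.exp (-u) - 1 + u) - u * T) := by
    intro u hu
    have hch := measure_le_le_exp_mul_mgf (μ := μ) (X := ∑ i, y i) m
      (neg_nonpos.2 hu) (hintexp y hmy hy01 (-u))
    have hmgf := mgf_sum_bernoulli_le hmy hy01 hyind (-u)
    rw [hEy] at hmgf
    calc (μ {ω | (∑ i, y i) ω ≤ m}).toReal
        ≤ Real.exp (-(-u) * m) * mgf (∑ i, y i) μ (-u) := hch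
      _ ≤ Real.exp (-(-u) * m) * Real.exp ((Real.exp (-u) - 1) * β) :=
          mul_le_mul_of_nonneg_left hmgf (Real.exp_pos _).le
      _ = Real.exp (β * (Real.exp (-u) - 1 + u) - u * T) := by
          rw [← Real.exp_add]
          congr 1
          rw [hmdef, hTdef]; ring
  -- strict upper tail bound
  have hupper : (μ {ω | m ≤ (∑ i, x i) ω}).toReal < Real.exp (-(T ^ 2 / (2 * (α + β)))) := by
    rcases le_or_gt T (2 * α) with hc | hc
    · -- s = T / (2α)
      have hαpos : 0 < α := by linarith
      set s : ℝ := T / (2 * α) with hsdef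
      have hs0 : 0 ≤ s := by positivity
      have hs1 : s ≤ 1 := by rw [hsdef, div_le_one (by linarith)]; linarith
      refine lt_of_le_of_lt (hup_gen s hs0) ?_
      rw [Real.exp_lt_exp]
      have hexp : Real.exp s - 1 - s ≤ s ^ 2 := by
        have := exp_le_one_add_self_add_sq hs0 hs1; linarith
      have h1 : α * (Real.exp s - 1 - s) ≤ α * s ^ 2 :=
        mul_le_mul_of_nonneg_left hexp hα0
      have h2 : α * s ^ 2 - s * T = -(T ^ 2 / (4 * α)) := by
        rw [hsdef]; field_simp; ring
      have h3 : T ^ 2 / (2 * (α + β)) < T ^ 2 / (4 * α) := by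
        apply div_lt_div_of_pos_left (by positivity) (by positivity)
        linarith
      linarith
    · -- s = 1
      refine lt_of_le_of_lt (hup_gen 1 zero_le_one) ?_
      rw [Real.exp_lt_exp]
      have hE : Real.exp 1 < 2.7182818286 := Real.exp_one_lt_d9
      have hE0 : (0:ℝ) < Real.exp 1 := Real.exp_pos 1
      have h2T : 2 * T = β - α := by rw [hTdef]; ring
      have key : T ^ 2 / (2 * (α + β)) < T - α * (Real.exp 1 - 2) := by
        rw [div_lt_iff₀ (by positivity)]
        nlinarith [mul_pos hT hT, mul_nonneg hα0 hT.le, mul_nonneg hα0 hα0,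
          mul_nonneg (sub_nonneg.2 hc.le) hT.le, mul_nonneg (sub_nonneg.2 hc.le) hα0,
          mul_nonneg hα0 (by linarith : (0:ℝ) ≤ 2.7182818286 - Real.exp 1)]
      linarith
  -- lower tail bound
  have hlower : (μ {ω | (∑ i, y i) ω ≤ m}).toReal ≤ Real.exp (-(T ^ 2 / (2 * (α + β)))) := by
    set u : ℝ := T / β with hudef
    have hu0 : 0 ≤ u := by positivity
    refine le_trans (hlow_gen u hu0) ?_
    rw [Real.exp_le_exp]
    have hq : Real.exp (-u) - 1 + u ≤ u ^ 2 / 2 := by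
      have := exp_neg_le_quad hu0; linarith
    have h1 : β * (Real.exp (-u) - 1 + u) ≤ β * (u ^ 2 / 2) :=
      mul_le_mul_of_nonneg_left hq hβ.le
    have h2 : β * (u ^ 2 / 2) - u * T = -(T ^ 2 / (2 * β)) := by
      rw [hudef]; field_simp; ring
    have h3 : T ^ 2 / (2 * (α + β)) ≤ T ^ 2 / (2 * β) := by
      apply div_le_div_of_nonneg_left (by positivity) (by positivity)
      linarith
    linarith
  -- union bound
  have hsub : {ω | (∑ i, y i) ω < (∑ i, x i) ω}
      ⊆ {ω | m ≤ (∑ i, x i) ω} ∪ {ω | (∑ i, y i) ω ≤ m} := by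
    intro ω h
    by_cases hm' : m ≤ (∑ i, x i) ω
    · exact Or.inl hm'
    · exact Or.inr (le_of_lt (lt_trans h (lt_of_not_ge hm')))
  have hμle : μ {ω | (∑ i, y i) ω < (∑ i, x i) ω}
      ≤ μ {ω | m ≤ (∑ i, x i) ω} + μ {ω | (∑ i, y i) ω ≤ m} :=
    (measure_mono hsub).trans (measure_union_le _ _)
  have htR : (μ {ω | (∑ i, y i) ω < (∑ i, x i) ω}).toReal
      ≤ (μ {ω | m ≤ (∑ i, x i) ω}).toReal + (μ {ω | (∑ i, y i) ω ≤ m}).toReal := by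
    have := ENNReal.toReal_mono
      (ENNReal.add_ne_top.2 ⟨measure_ne_top _ _, measure_ne_top _ _⟩) hμle
    rwa [ENNReal.toReal_add (measure_ne_top _ _) (measure_ne_top _ _)] at this
  have hfin : (μ {ω | (∑ i, y i) ω < (∑ i, x i) ω}).toReal
      < 2 * Real.exp (-(T ^ 2 / (2 * (α + β)))) := by linarith
  have hsetgoal : {ω | ∑ i, y i ω < ∑ i, x i ω}
      = {ω | (∑ i, y i) ω < (∑ i, x i) ω} := by
    ext ω; simp [Finset.sum_apply]
  have hexp_eq : -(α - β) ^ 2 / (8 * (α + β)) = -(T ^ 2 / (2 * (α + β))) := by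
    rw [hTdef]; field_simp; ring
  rw [hsetgoal, hexp_eq]
  exact (ENNReal.lt_ofReal_iff_toReal_lt (measure_ne_top μ _)).2 hfin
end

section
/- For integers n ≥ s' with each individual count i_j ≤ ln s and Σ_j i_j = s', the product ∏_j s!/((s − i_j)!) satisfies (s − ln s)^{s'} ≤ ∏_j s!/(s − i_j)! ≤ s^{s'}, and moreover s^{s'}(1 − ln s/s)^{s'} ≥ s'^{s'} e^{s−s'}/(2s) when s' ∈ [s − √s, s + √s] and s is sufficiently large. -/
open Finset

private lemma taylor_log_one_add {x : ℝ} (hx : |x| ≤ 1/100) :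
    x - 0.52 * x ^ 2 ≤ Real.log (1 + x) := by
  have h1 : |(-x)| < 1 := by rw [abs_neg]; linarith [abs_nonneg x, hx]
  have h := Real.abs_log_sub_add_sum_range_le h1 2
  have hsum : (∑ i ∈ range 2, (-x) ^ (i + 1) / (i + 1)) = -x + x ^ 2 / 2 := by
    simp [Finset.sum_range_succ]
    ring
  rw [hsum] at h
  have h2 : (1 : ℝ) - (-x) = 1 + x := by ring
  rw [h2] at h
  have habs : |(-x)| ^ (2 + 1) / (1 - |(-x)|) ≤ 0.02 * x ^ 2 := by
    rw [abs_neg]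
    have h3 : |x| ^ 3 ≤ (1/100) * x ^ 2 := by
      have : |x| ^ 3 = |x| * |x| ^ 2 := by ring
      rw [this, sq_abs]
      have : x ^ 2 ≥ 0 := sq_nonneg x
      nlinarith [abs_nonneg x]
    have h4 : (1 : ℝ) - |x| ≥ 99/100 := by linarith
    rw [div_le_iff₀ (by linarith)]
    nlinarith [sq_nonneg x, abs_nonneg x]
  have h5 : -(0.02 * x ^ 2) ≤ (-x + x ^ 2 / 2) + Real.log (1 + x) := by
    have := (abs_le.1 h).1
    linarith
  nlinarith [h5]

set_option maxHeartbeats 2000000 in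
/-- For nonnegative integers `i_1,...,i_n` with each `i_j ≤ ln s` and
`Σ i_j = s'` (with `n ≥ s'`), `(s - ln s)^{s'} ≤ ∏_j s!/(s - i_j)! ≤ s^{s'}`; moreover,
for `s` sufficiently large and `s' ∈ [s - √s, s + √s]`,
`s^{s'} (1 - ln s / s)^{s'} ≥ s'^{s'} e^{s - s'} / (2s)`. -/
theorem falling_factorial_product_bounds :
    (∀ (s n s' : ℕ) (i : Fin n → ℕ),
      s' ≤ n →
      (∀ j, (i j : ℝ) ≤ Real.log s) →
      (∑ j, i j) = s' →
      ((s : ℝ) - Real.log s) ^ s' ≤ ∏ j, ((s.factorial : ℝ) / ((s - i j).factorial : ℝ))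
        ∧ ∏ j, ((s.factorial : ℝ) / ((s - i j).factorial : ℝ)) ≤ (s : ℝ) ^ s')
    ∧ ∃ s₀ : ℕ, ∀ s : ℕ, s₀ ≤ s → ∀ s' : ℕ,
        (s : ℝ) - Real.sqrt s ≤ (s' : ℝ) → (s' : ℝ) ≤ (s : ℝ) + Real.sqrt s →
        (s' : ℝ) ^ s' * Real.exp ((s : ℝ) - (s' : ℝ)) / (2 * s)
          ≤ (s : ℝ) ^ s' * (1 - Real.log s / s) ^ s' := by
  constructor
  · intro s n s' i _hs'n hle hsum
    have hlogs : Real.log s ≤ (s : ℝ) := by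
      rcases Nat.eq_zero_or_pos s with h | h
      · simp [h]
      · have hs1 : (0 : ℝ) < s := by exact_mod_cast h
        have := Real.log_le_sub_one_of_pos hs1
        linarith
    have hlognn : 0 ≤ Real.log s := Real.log_natCast_nonneg s
    have hbase_nn : (0 : ℝ) ≤ (s : ℝ) - Real.log s := by linarith
    have his : ∀ j, i j ≤ s := by
      intro j
      have : (i j : ℝ) ≤ (s : ℝ) := (hle j).trans hlogs
      exact_mod_cast this
    have key : ∀ j, ((s.factorial : ℝ) / ((s - i j).factorial : ℝ))
        = (s.descFactorial (i j) : ℝ) := by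
      intro j
      have h := Nat.factorial_mul_descFactorial (his j)
      have h' : ((s - i j).factorial : ℝ) * (s.descFactorial (i j) : ℝ)
          = (s.factorial : ℝ) := by exact_mod_cast congrArg (Nat.cast : ℕ → ℝ) h
      have hne : ((s - i j).factorial : ℝ) ≠ 0 := by
        exact_mod_cast (Nat.factorial_pos _).ne'
      field_simp
      linarith [h']
    simp_rw [key]
    constructor
    · calc ((s : ℝ) - Real.log s) ^ s'
          = ∏ j, ((s : ℝ) - Real.log s) ^ i j := by
            rw [Finset.prod_pow_eq_pow_sum, hsum]
        _ ≤ ∏ j, (s.descFactorial (i j) : ℝ) := by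
            apply Finset.prod_le_prod
            · intro j _; positivity
            · intro j _
              have h1 : ((s : ℝ) - Real.log s) ^ i j
                  ≤ (((s + 1 - i j : ℕ) : ℝ)) ^ i j := by
                apply pow_le_pow_left₀ hbase_nn
                have : ((s + 1 - i j : ℕ) : ℝ) = (s : ℝ) + 1 - (i j : ℝ) := by
                  have : i j ≤ s + 1 := le_trans (his j) (Nat.le_succ s)
                  push_cast [Nat.cast_sub this]
                  ring
                rw [this]
                have := hle j
                linarith
              refine h1.trans ?_
              exact_mod_cast Nat.pow_sub_le_descFactorial s (i j)
    · calc (∏ j, (s.descFactorial (i j) : ℝ))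
          ≤ ∏ j, ((s : ℝ)) ^ i j := by
            apply Finset.prod_le_prod
            · intro j _; positivity
            · intro j _
              exact_mod_cast Nat.descFactorial_le_pow s (i j)
        _ = (s : ℝ) ^ s' := by rw [Finset.prod_pow_eq_pow_sum, hsum]
  · refine ⟨10 ^ 8, fun s hs s' h1 h2 => ?_⟩
    set sR : ℝ := (s : ℝ) with hsR_def
    have hsR : (10 ^ 8 : ℝ) ≤ sR := by
      show ((10:ℝ)) ^ 8 ≤ (s : ℝ)
      exact_mod_cast hs
    have hsR_pos : (0 : ℝ) < sR := by linarith
    set r : ℝ := Real.sqrt sR with hr_def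
    have hrr : r * r = sR := Real.mul_self_sqrt hsR_pos.le
    have hr : (10 ^ 4 : ℝ) ≤ r := by
      rw [hr_def]
      rw [show ((10:ℝ) ^ 4) = Real.sqrt ((10 : ℝ) ^ 8) by
        rw [show ((10:ℝ)^8) = (10^4 : ℝ)^2 by norm_num]
        exact (Real.sqrt_sq (by norm_num)).symm]
      exact Real.sqrt_le_sqrt hsR
    have hr_nonneg : (0 : ℝ) ≤ r := by linarith
    have hrsR : 10 ^ 4 * r ≤ sR := by
      have := mul_le_mul_of_nonneg_right hr hr_nonneg
      linarith [hrr]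
    set L : ℝ := Real.log sR with hL_def
    have hL0 : 0 ≤ L := Real.log_nonneg (by linarith)
    have hL : L ≤ 0.04 * r := by
      have hlog4 : L ≤ sR ^ (1/4 : ℝ) / (1/4 : ℝ) :=
        Real.log_le_rpow_div hsR_pos.le (by norm_num)
      have hq : sR ^ (1/4 : ℝ) = Real.sqrt r := by
        rw [hr_def, Real.sqrt_eq_rpow, Real.sqrt_eq_rpow, ← Real.rpow_mul hsR_pos.le]
        norm_num
      have hsq : Real.sqrt r * Real.sqrt r = r := Real.mul_self_sqrt hr_nonneg
      have hsq100 : (100 : ℝ) ≤ Real.sqrt r := by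
        rw [show (100:ℝ) = Real.sqrt (10^4) by
          rw [show ((10:ℝ)^4) = (100:ℝ)^2 by norm_num]
          exact (Real.sqrt_sq (by norm_num)).symm]
        exact Real.sqrt_le_sqrt hr
      have h4 : sR ^ (1/4 : ℝ) / (1/4 : ℝ) = 4 * Real.sqrt r := by rw [hq]; ring
      rw [h4] at hlog4
      nlinarith [hsq100, hsq]
    set t : ℝ := (s' : ℝ) with ht_def
    have ht_lb : 0.99 * sR ≤ t := by
      have h1' : sR - r ≤ t := h1
      linarith
    have ht_pos : (0 : ℝ) < t := by linarith
    set A : ℝ := sR - L with hA_def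
    have hA_pos : (0 : ℝ) < A := by
      simp only [hA_def]; linarith
    set d : ℝ := A - t with hd_def
    have hd_abs : |d| ≤ 1.04 * r := by
      rw [abs_le]
      have h1' : sR - r ≤ t := h1
      have h2' : t ≤ sR + r := h2
      constructor
      · simp only [hd_def, hA_def]; linarith
      · simp only [hd_def, hA_def]; linarith
    set x : ℝ := d / t with hx_def
    have hx_abs : |x| ≤ 1/100 := by
      rw [hx_def, abs_div, abs_of_pos ht_pos, div_le_iff₀ ht_pos]
      have h104 : 10 ^ 4 * r ≤ r * r := by
        have := mul_le_mul_of_nonneg_right hr hr_nonneg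
        linarith
      linarith [hd_abs, ht_lb, hrr]
    have h1px : 1 + x = A / t := by
      rw [hx_def, hd_def]; field_simp; ring
    have hlog1p : x - 0.52 * x ^ 2 ≤ Real.log (1 + x) := taylor_log_one_add hx_abs
    have hd2 : 0.52 * d ^ 2 ≤ 0.676 * t := by
      have hsq : d ^ 2 ≤ 1.0816 * sR := by
        nlinarith [hd_abs, abs_nonneg d, sq_abs d, hr_nonneg, hrr]
      linarith [ht_lb, hsq, hsR_pos]
    have hmain : t * Real.log t + (sR - t) - Real.log (2 * sR) ≤ t * Real.log A := by
      have hlogA : Real.log A - Real.log t = Real.log (1 + x) := by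
        rw [h1px, Real.log_div hA_pos.ne' ht_pos.ne']
      have htx : t * x = d := by rw [hx_def]; field_simp
      have htx2 : t * x ^ 2 = d ^ 2 / t := by
        rw [hx_def]; field_simp
      have h6 : d - 0.676 ≤ t * Real.log (1 + x) := by
        have h7 : t * (x - 0.52 * x ^ 2) ≤ t * Real.log (1 + x) :=
          mul_le_mul_of_nonneg_left hlog1p ht_pos.le
        have h8 : t * (x - 0.52 * x ^ 2) = d - 0.52 * (d ^ 2 / t) := by
          rw [mul_sub, htx, mul_comm (0.52 : ℝ) (x^2), ← mul_assoc, htx2]; ring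
        have h9 : 0.52 * (d ^ 2 / t) ≤ 0.676 := by
          rw [mul_div_assoc', div_le_iff₀ ht_pos]
          linarith [hd2]
        linarith
      have hlog2s : Real.log (2 * sR) = Real.log 2 + L := by
        rw [Real.log_mul (by norm_num) hsR_pos.ne']
      have hlog2 : (0.676 : ℝ) ≤ Real.log 2 := by
        have := Real.log_two_gt_d9
        linarith
      have hst : sR - t = d + L := by simp only [hd_def, hA_def]; ring
      have hexp : t * Real.log A = t * Real.log t + t * Real.log (1 + x) := by
        have h10 : Real.log A = Real.log t + Real.log (1 + x) := by linarith [hlogA]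
        rw [h10]; ring
      rw [hexp, hlog2s, hst]
      linarith [h6, hlog2]
    have hRHS_eq : sR ^ s' * (1 - L / sR) ^ s' = A ^ s' := by
      rw [← mul_pow]
      congr 1
      field_simp
      exact hA_def.symm
    rw [hRHS_eq]
    have hLHS_pos : (0 : ℝ) < t ^ s' * Real.exp (sR - t) / (2 * sR) := by positivity
    have hRHS_pos : (0 : ℝ) < A ^ s' := by positivity
    have hlogs : Real.log (t ^ s' * Real.exp (sR - t) / (2 * sR)) ≤ Real.log (A ^ s') := by
      rw [Real.log_div (by positivity) (by positivity),
        Real.log_mul (by positivity) (Real.exp_pos _).ne', Real.log_exp,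
        Real.log_pow, Real.log_pow]
      have hts' : (s' : ℝ) = t := rfl
      rw [hts']
      linarith [hmain]
    calc t ^ s' * Real.exp (sR - t) / (2 * sR)
        = Real.exp (Real.log (t ^ s' * Real.exp (sR - t) / (2 * sR))) :=
          (Real.exp_log hLHS_pos).symm
      _ ≤ Real.exp (Real.log (A ^ s')) := Real.exp_le_exp.2 hlogs
      _ = A ^ s' := Real.exp_log hRHS_pos
end

section
/- Let P and Q be weakly disjoint distributions and suppose the number of samples satisfies s ≤ 0.25/‖P−Q‖₃, where ‖P−Q‖₃ = (Σ_i |p_i − q_i|³)^{1/3}. For each element x in the disjoint part, call x 'helpful' if it is sampled at least 3 times in total across the 2s training samples and s testing samples. Then the probability that at least one helpful element exists is at most 1/20. -/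
open MeasureTheory ProbabilityTheory Finset

/-- For weakly disjoint distributions `P, Q` and
`s ≤ 0.25 / ‖P - Q‖₃`, sampling `s` training samples from each of `P` and `Q` and `s`
testing samples from `T ∈ {P, Q}` (all independent), the probability that some element
of the disjoint part is sampled at least 3 times in total is at most `1/20`. -/
theorem helpful_elements_unlikely
    {Ω : Type*} [MeasurableSpace Ω] (μ : Measure Ω) [IsProbabilityMeasure μ]
    (n s : ℕ) (p q t : Fin n → ℝ) (Z : Fin (3 * s) → Ω → Fin n)
    (hp0 : ∀ i, 0 ≤ p i) (hp1 : ∑ i, p i = 1)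
    (hq0 : ∀ i, 0 ≤ q i) (hq1 : ∑ i, q i = 1)
    (hweak : ∀ i, p i = q i ∨ (0 < p i ∧ q i = 0) ∨ (0 < q i ∧ p i = 0))
    (hT : t = p ∨ t = q)
    (hs : (s : ℝ) ≤ 0.25 / (∑ i, |p i - q i| ^ 3) ^ ((1 : ℝ) / 3))
    (hmeas : ∀ k, Measurable (Z k))
    (hindep : iIndepFun Z μ)
    (hdist : ∀ k i, μ {ω | Z k ω = i}
      = ENNReal.ofReal
          (if (k : ℕ) < s then p i else if (k : ℕ) < 2 * s then q i else t i)) :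
    μ {ω | ∃ i : Fin n, p i ≠ q i
        ∧ 3 ≤ (Finset.univ.filter fun k => Z k ω = i).card}
      ≤ ENNReal.ofReal (1 / 20) := by
  classical
  set v : Fin n → Fin (3 * s) → ℝ := fun i k =>
    if (k : ℕ) < s then p i else if (k : ℕ) < 2 * s then q i else t i with hv
  set r : Fin n → ℝ := fun i => |p i - q i| with hr
  set S : Finset (Fin n) := univ.filter (fun i => p i ≠ q i) with hS
  set N : ℕ := (2 * s).choose 3 with hN
  have ht0 : ∀ i, 0 ≤ t i := by rcases hT with h | h <;> simp [h, hp0, hq0]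
  have hv0 : ∀ i k, 0 ≤ v i k := by
    intro i k; simp only [hv]
    split_ifs with h1 h2
    · exact hp0 i
    · exact hq0 i
    · exact ht0 i
  have hr0 : ∀ i, 0 ≤ r i := fun i => abs_nonneg _
  have hvr : ∀ i ∈ S, ∀ k, v i k ≤ r i := by
    intro i hi k
    have hne : p i ≠ q i := (mem_filter.mp hi).2
    rcases hweak i with h | h | h
    · exact absurd h hne
    · have hri : r i = p i := by simp [hr, h.2, abs_of_nonneg (hp0 i)]
      simp only [hv]
      split_ifs
      · exact hri.ge
      · rw [h.2, hri]; exact hp0 i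
      · rcases hT with h' | h' <;> simp [h', hri, h.2, hp0 i]
    · have hri : r i = q i := by
        simp [hr, h.2, abs_of_nonpos (by linarith [h.1] : p i - q i ≤ 0)]
      simp only [hv]
      split_ifs
      · rw [h.2, hri]; exact hq0 i
      · exact hri.ge
      · rcases hT with h' | h' <;> simp [h', hri, h.2, hq0 i]
  -- the support of v i · has at most 2s elements
  have hKcard : ∀ i ∈ S, (univ.filter fun k : Fin (3 * s) => v i k ≠ 0).card ≤ 2 * s := by
    intro i hi
    have hne : p i ≠ q i := (mem_filter.mp hi).2
    set K := univ.filter fun k : Fin (3 * s) => v i k ≠ 0 with hKdef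
    rcases hweak i with h | h | h
    · exact absurd h hne
    · -- q i = 0 : middle block is zero
      have hzero : ∀ k ∈ K, (k : ℕ) < s ∨ 2 * s ≤ (k : ℕ) := by
        intro k hk
        by_contra hc
        push_neg at hc
        have : v i k = 0 := by simp [hv, h.2, hc.2, Nat.not_lt.mpr hc.1]
        exact (mem_filter.mp hk).2 this
      have := Finset.card_le_card_of_injOn (s := K) (t := Finset.range (2 * s))
        (f := fun k : Fin (3 * s) => if (k : ℕ) < s then (k : ℕ) else (k : ℕ) - s)
        (fun k hk => by
          have hk3 := k.isLt
          rcases hzero k hk with h' | h' <;> simp only [Finset.mem_coe, Finset.mem_range] <;> split_ifs <;> omega)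
        (fun k1 hk1 k2 hk2 hfe => by
          have h1 := hzero k1 (Finset.mem_coe.mp hk1); have h2 := hzero k2 (Finset.mem_coe.mp hk2)
          have e1 := k1.isLt; have e2 := k2.isLt
          simp only at hfe
          apply Fin.ext
          split_ifs at hfe <;> omega)
      simpa using this
    · -- p i = 0 : first block is zero
      have hzero : ∀ k ∈ K, s ≤ (k : ℕ) := by
        intro k hk
        by_contra hc
        push_neg at hc
        have : v i k = 0 := by simp [hv, h.2, hc]
        exact (mem_filter.mp hk).2 this
      have := Finset.card_le_card_of_injOn (s := K) (t := Finset.range (2 * s))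
        (f := fun k : Fin (3 * s) => (k : ℕ) - s)
        (fun k hk => by
          have hk3 := k.isLt; have := hzero k hk
          simp only [Finset.mem_coe, Finset.mem_range]; omega)
        (fun k1 hk1 k2 hk2 hfe => by
          have h1 := hzero k1 (Finset.mem_coe.mp hk1); have h2 := hzero k2 (Finset.mem_coe.mp hk2)
          simp only at hfe
          exact Fin.ext (by omega))
      simpa using this
  -- probability of a triple via independence
  have hprod : ∀ (i : Fin n) (T : Finset (Fin (3 * s))),
      μ (⋂ k ∈ T, {ω | Z k ω = i}) = ∏ k ∈ T, ENNReal.ofReal (v i k) := by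
    intro i T
    have hind := hindep.measure_inter_preimage_eq_mul T
      (sets := fun _ => ({i} : Set (Fin n))) (fun k _ => measurableSet_singleton i)
    have hpre : ∀ k : Fin (3 * s), Z k ⁻¹' ({i} : Set (Fin n)) = {ω | Z k ω = i} := by
      intro k; ext ω; simp [Set.mem_preimage]
    calc μ (⋂ k ∈ T, {ω | Z k ω = i})
        = μ (⋂ k ∈ T, Z k ⁻¹' ({i} : Set (Fin n))) := by simp_rw [hpre]
      _ = ∏ k ∈ T, μ (Z k ⁻¹' ({i} : Set (Fin n))) := hind
      _ = ∏ k ∈ T, ENNReal.ofReal (v i k) := by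
          refine Finset.prod_congr rfl fun k _ => ?_
          rw [hpre k, hdist k i]
  -- per element bound
  have hEi : ∀ i ∈ S,
      μ {ω | 3 ≤ (Finset.univ.filter fun k => Z k ω = i).card}
        ≤ (N : ENNReal) * ENNReal.ofReal (r i) ^ 3 := by
    intro i hi
    set K := univ.filter fun k : Fin (3 * s) => v i k ≠ 0 with hKdef
    have hsub : {ω | 3 ≤ (Finset.univ.filter fun k => Z k ω = i).card} ⊆
        ⋃ T ∈ powersetCard 3 (univ : Finset (Fin (3 * s))), ⋂ k ∈ T, {ω | Z k ω = i} := by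
      intro ω hω
      obtain ⟨T, hTsub, hTcard⟩ := Finset.exists_subset_card_eq hω
      refine Set.mem_iUnion₂.mpr ⟨T, ?_, ?_⟩
      · exact Finset.mem_powersetCard.mpr ⟨Finset.subset_univ _, hTcard⟩
      · exact Set.mem_iInter₂.mpr fun k hk => (Finset.mem_filter.mp (hTsub hk)).2
    calc μ {ω | 3 ≤ (Finset.univ.filter fun k => Z k ω = i).card}
        ≤ μ (⋃ T ∈ powersetCard 3 (univ : Finset (Fin (3 * s))),
            ⋂ k ∈ T, {ω | Z k ω = i}) := measure_mono hsub
      _ ≤ ∑ T ∈ powersetCard 3 (univ : Finset (Fin (3 * s))),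
            μ (⋂ k ∈ T, {ω | Z k ω = i}) := measure_biUnion_finset_le _ _
      _ = ∑ T ∈ powersetCard 3 (univ : Finset (Fin (3 * s))),
            ∏ k ∈ T, ENNReal.ofReal (v i k) := Finset.sum_congr rfl fun T _ => hprod i T
      _ ≤ ∑ T ∈ powersetCard 3 (univ : Finset (Fin (3 * s))),
            (if T ⊆ K then ENNReal.ofReal (r i) ^ 3 else 0) := by
          refine Finset.sum_le_sum fun T hT => ?_
          by_cases hTK : T ⊆ K
          · rw [if_pos hTK]
            have hTcard : T.card = 3 := (Finset.mem_powersetCard.mp hT).2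
            calc ∏ k ∈ T, ENNReal.ofReal (v i k)
                ≤ ∏ _k ∈ T, ENNReal.ofReal (r i) :=
                  Finset.prod_le_prod' fun k _ => ENNReal.ofReal_le_ofReal (hvr i hi k)
              _ = ENNReal.ofReal (r i) ^ 3 := by rw [Finset.prod_const, hTcard]
          · rw [if_neg hTK]
            obtain ⟨k, hkT, hkK⟩ := Finset.not_subset.mp hTK
            have hvk : v i k = 0 := by
              by_contra hc
              exact hkK (Finset.mem_filter.mpr ⟨Finset.mem_univ _, hc⟩)
            exact le_of_eq (Finset.prod_eq_zero hkT (by simp [hvk]))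
      _ = ∑ T ∈ (powersetCard 3 (univ : Finset (Fin (3 * s)))).filter (· ⊆ K),
            ENNReal.ofReal (r i) ^ 3 := (Finset.sum_filter _ _).symm
      _ = (K.card.choose 3 : ENNReal) * ENNReal.ofReal (r i) ^ 3 := by
          have : (powersetCard 3 (univ : Finset (Fin (3 * s)))).filter (· ⊆ K)
              = powersetCard 3 K := by
            ext T
            simp only [Finset.mem_filter, Finset.mem_powersetCard, Finset.subset_univ,
              true_and]
            tauto
          rw [this, Finset.sum_const, Finset.card_powersetCard, nsmul_eq_mul]
      _ ≤ (N : ENNReal) * ENNReal.ofReal (r i) ^ 3 := by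
          gcongr
          exact_mod_cast Nat.choose_le_choose 3 (hKcard i hi)
  -- main chain
  have hEeq : {ω | ∃ i : Fin n, p i ≠ q i
        ∧ 3 ≤ (Finset.univ.filter fun k => Z k ω = i).card}
      = ⋃ i ∈ S, {ω | 3 ≤ (Finset.univ.filter fun k => Z k ω = i).card} := by
    ext ω
    simp [hS, Finset.mem_filter]
  set B : ℝ := ∑ i ∈ S, r i ^ 3 with hB
  have hBA : B ≤ ∑ i, |p i - q i| ^ 3 := by
    refine Finset.sum_le_sum_of_subset_of_nonneg (Finset.filter_subset _ _) ?_
    intro i _ _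
    positivity
  have hB0 : 0 ≤ B := Finset.sum_nonneg fun i _ => by positivity
  -- real arithmetic: N * B ≤ 1/20
  have hA0 : 0 ≤ ∑ i, |p i - q i| ^ 3 := Finset.sum_nonneg fun i _ => by positivity
  have hsA : (s : ℝ) ^ 3 * (∑ i, |p i - q i| ^ 3) ≤ 1 / 64 := by
    set A := ∑ i, |p i - q i| ^ 3 with hAdef
    rcases eq_or_lt_of_le hA0 with hA | hA
    · rw [← hA]; norm_num
    · have h13 : (0 : ℝ) < A ^ ((1 : ℝ) / 3) := Real.rpow_pos_of_pos hA _
      have hmul : (s : ℝ) * A ^ ((1 : ℝ) / 3) ≤ 0.25 := by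
        rw [div_eq_mul_inv] at hs
        calc (s : ℝ) * A ^ ((1 : ℝ) / 3)
            ≤ 0.25 * (A ^ ((1 : ℝ) / 3))⁻¹ * A ^ ((1 : ℝ) / 3) := by
              exact mul_le_mul_of_nonneg_right hs h13.le
          _ = 0.25 := by field_simp
      have hcube : ((s : ℝ) * A ^ ((1 : ℝ) / 3)) ^ 3 ≤ 0.25 ^ 3 := by
        apply pow_le_pow_left₀ (by positivity) hmul
      have hAcube : (A ^ ((1 : ℝ) / 3)) ^ 3 = A := by
        rw [← Real.rpow_natCast (A ^ ((1 : ℝ) / 3)) 3, ← Real.rpow_mul hA0]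
        norm_num
      rw [mul_pow, hAcube] at hcube
      calc (s : ℝ) ^ 3 * A ≤ 0.25 ^ 3 := hcube
        _ ≤ 1 / 64 := by norm_num
  have hNle : (6 : ℝ) * N ≤ 8 * (s : ℝ) ^ 3 := by
    have h1 : 6 * N ≤ (2 * s) ^ 3 := by
      have := Nat.descFactorial_le_pow (2 * s) 3
      rw [Nat.descFactorial_eq_factorial_mul_choose] at this
      calc 6 * N = Nat.factorial 3 * (2 * s).choose 3 := by norm_num [Nat.factorial, hN]
        _ ≤ (2 * s) ^ 3 := this
    have h2 := (Nat.cast_le (α := ℝ)).mpr h1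
    push_cast at h2
    linarith
  have hfinal : (N : ℝ) * B ≤ 1 / 20 := by
    have hsB : (s : ℝ) ^ 3 * B ≤ 1 / 64 := by
      rcases Nat.eq_zero_or_pos s with hs0 | hs0
      · calc (s : ℝ) ^ 3 * B ≤ (s : ℝ) ^ 3 * (∑ i, |p i - q i| ^ 3) := by
              apply mul_le_mul_of_nonneg_left hBA (by positivity)
          _ ≤ 1 / 64 := hsA
      · calc (s : ℝ) ^ 3 * B ≤ (s : ℝ) ^ 3 * (∑ i, |p i - q i| ^ 3) := by
              apply mul_le_mul_of_nonneg_left hBA (by positivity)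
          _ ≤ 1 / 64 := hsA
    nlinarith [hB0, Nat.cast_nonneg (α := ℝ) N]
  calc μ {ω | ∃ i : Fin n, p i ≠ q i
        ∧ 3 ≤ (Finset.univ.filter fun k => Z k ω = i).card}
      = μ (⋃ i ∈ S, {ω | 3 ≤ (Finset.univ.filter fun k => Z k ω = i).card}) := by rw [hEeq]
    _ ≤ ∑ i ∈ S, μ {ω | 3 ≤ (Finset.univ.filter fun k => Z k ω = i).card} :=
        measure_biUnion_finset_le _ _
    _ ≤ ∑ i ∈ S, (N : ENNReal) * ENNReal.ofReal (r i) ^ 3 :=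
        Finset.sum_le_sum hEi
    _ = (N : ENNReal) * ENNReal.ofReal B := by
        rw [← Finset.mul_sum]
        congr 1
        rw [hB, ENNReal.ofReal_sum_of_nonneg (fun i _ => by positivity)]
        refine Finset.sum_congr rfl fun i _ => ?_
        rw [← ENNReal.ofReal_pow (hr0 i)]
    _ = ENNReal.ofReal ((N : ℝ) * B) := by
        rw [ENNReal.ofReal_mul (by positivity), ENNReal.ofReal_natCast]
    _ ≤ ENNReal.ofReal (1 / 20) := ENNReal.ofReal_le_ofReal hfinal
end
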